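/- There exists a positive constant C (depending only on p, A, B) such that ‖∂_x((∂_x U)^p)(t,·)‖_{L²(ℝ)} = C·t^{−(2p+1)/(2(p+1))} for all t > 0, where (∂_x U)^p(t,·) is continuously differentiable in x and its derivative ∂_x((∂_x U)^p) is the integrand of the L² norm. -/

import Mathlib

open Real MeasureTheory Filter Set

/-- The Barenblatt-type profile `v(t,x) = t^{-1/(p+1)} (max(A - B(x t^{-1/(p+1)})², 0))^{1/(p-1)}`,
the spatial derivative of the contact wave for `p`-Laplacian type viscosity. -/
noncomputable def vfun (p A B t x : ℝ) : ℝ :=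
  t ^ (-(1:ℝ)/(p+1)) * (max (A - B * (x * t ^ (-(1:ℝ)/(p+1)))^2) 0) ^ ((1:ℝ)/(p-1))

/-- The contact wave for `p`-Laplacian type viscosity,
`U(t,x) = u₋ + ∫_{-∞}^x t^{-1/(p+1)} (max(A - B(y t^{-1/(p+1)})², 0))^{1/(p-1)} dy`. -/
noncomputable def Ucw (p A B um t x : ℝ) : ℝ :=
  um + ∫ y in Set.Iio x, vfun p A B t y


open Topology

noncomputable def hfun (A B q y : ℝ) : ℝ := (max (A - B * y^2) 0) ^ q
noncomputable def gfun (A B q y : ℝ) : ℝ := q * (max (A - B * y^2) 0) ^ (q-1) * (-(2*B*y))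

lemma hasDerivAt_hfun (A B q : ℝ) (hq : 1 < q) (y : ℝ) :
    HasDerivAt (hfun A B q) (gfun A B q y) y := by
  have hF : HasDerivAt (fun z : ℝ => A - B * z^2) (-(2*B*y)) y := by
    have := ((hasDerivAt_pow 2 y).const_mul B).const_sub A
    refine this.congr_deriv ?_
    ring
  have hFc : Continuous (fun z : ℝ => A - B * z^2) := by continuity
  rcases lt_trichotomy (A - B * y^2) 0 with hneg | hzero | hpos
  · -- locally zero
    have hev : ∀ᶠ z in 𝓝 y, A - B * z^2 < 0 :=
      hFc.continuousAt.eventually_lt continuousAt_const hneg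
    have h0 : gfun A B q y = 0 := by
      simp [gfun, max_eq_right hneg.le, Real.zero_rpow (by linarith : q - 1 ≠ 0)]
    rw [h0]
    apply HasDerivAt.congr_of_eventuallyEq (hasDerivAt_const y ((0:ℝ)^q))
    filter_upwards [hev] with z hz
    simp [hfun, max_eq_right hz.le]
  · -- boundary: squeeze
    have hg0 : gfun A B q y = 0 := by
      simp [gfun, hzero, Real.zero_rpow (by linarith : q - 1 ≠ 0)]
    rw [hg0, hasDerivAt_iff_tendsto_slope]
    set K : ℝ := |B| * (2*|y|+1) with hK
    have hK0 : 0 ≤ K := by positivity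
    have htend : Tendsto (fun z : ℝ => K^q * |z - y| ^ (q-1)) (𝓝[≠] y) (𝓝 0) := by
      have h1 : Tendsto (fun z : ℝ => |z - y|) (𝓝 y) (𝓝 0) := by
        have hc : Continuous fun z : ℝ => |z - y| := by continuity
        simpa using hc.tendsto y
      have h2 : ContinuousAt (fun x : ℝ => x ^ (q-1)) 0 :=
        Real.continuousAt_rpow_const 0 (q-1) (Or.inr (by linarith))
      have h3 : Tendsto (fun z : ℝ => |z - y| ^ (q-1)) (𝓝 y) (𝓝 0) := by
        have := h2.tendsto.comp h1
        simpa [Function.comp_def, Real.zero_rpow (by linarith : q - 1 ≠ 0)] using this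
      simpa using ((h3.const_mul (K^q)).mono_left nhdsWithin_le_nhds)
    apply squeeze_zero_norm' _ htend
    have hev : ∀ᶠ z in 𝓝 y, |z - y| < 1 := by
      have hc : ContinuousAt (fun z : ℝ => |z - y|) y := by fun_prop
      have h0 : |y - y| < (1:ℝ) := by simp
      exact hc.eventually_lt continuousAt_const h0
    filter_upwards [eventually_nhdsWithin_of_eventually_nhds hev, self_mem_nhdsWithin]
      with z hz1 hz2
    have hzy : z ≠ y := hz2
    have hzy' : (0:ℝ) < |z - y| := abs_pos.mpr (sub_ne_zero.mpr hzy)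
    have hfy : hfun A B q y = 0 := by
      simp [hfun, hzero, Real.zero_rpow (by linarith : q ≠ 0)]
    have hmle : max (A - B * z^2) 0 ≤ K * |z - y| := by
      have h1 : max (A - B * z^2) 0 ≤ |A - B * z^2| :=
        max_le (le_abs_self _) (abs_nonneg _)
      have h2 : A - B * z^2 = -(B * (z - y) * (z + y)) := by
        have : A - B * y^2 = 0 := hzero
        nlinarith [this]
      have h3 : |A - B * z^2| = |B| * |z - y| * |z + y| := by
        rw [h2, abs_neg, abs_mul, abs_mul]
      have h4 : |z + y| ≤ 2*|y| + 1 := by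
        have : |z + y| ≤ |z - y| + 2*|y| := by
          calc |z + y| = |(z - y) + 2*y| := by ring_nf
          _ ≤ |z - y| + |2*y| := abs_add_le _ _
          _ = |z - y| + 2*|y| := by rw [abs_mul]; norm_num
        linarith
      calc max (A - B * z^2) 0 ≤ |B| * |z - y| * |z + y| := h1.trans h3.le
        _ ≤ |B| * |z - y| * (2*|y| + 1) := by
            apply mul_le_mul_of_nonneg_left h4 (by positivity)
        _ = K * |z - y| := by rw [hK]; ring
    have hb : hfun A B q z ≤ K^q * |z - y|^(q-1) * |z - y| := by
      have h5 : hfun A B q z ≤ (K * |z - y|)^q :=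
        Real.rpow_le_rpow (le_max_right _ 0) hmle (by linarith)
      have h6 : (K * |z - y|)^q = K^q * (|z - y|^(q-1) * |z - y|) := by
        rw [Real.mul_rpow hK0 (abs_nonneg _)]
        congr 1
        have h7 := Real.rpow_add hzy' (q-1) 1
        rw [Real.rpow_one] at h7
        rw [← h7]
        norm_num
      calc hfun A B q z ≤ (K * |z - y|)^q := h5
        _ = K^q * |z - y|^(q-1) * |z - y| := by rw [h6]; ring
    have hsl : slope (hfun A B q) y z = (z - y)⁻¹ * hfun A B q z := by
      simp [slope, hfy]
    have hnn : 0 ≤ hfun A B q z := Real.rpow_nonneg (le_max_right _ 0) q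
    rw [hsl]
    have : ‖(z - y)⁻¹ * hfun A B q z‖ = hfun A B q z / |z - y| := by
      rw [norm_mul, norm_inv, Real.norm_eq_abs, Real.norm_eq_abs, abs_of_nonneg hnn]
      ring
    rw [this, div_le_iff₀ hzy']
    exact hb
  · -- positive region
    have hev : ∀ᶠ z in 𝓝 y, 0 < A - B * z^2 :=
      continuousAt_const.eventually_lt hFc.continuousAt hpos
    have hmax : max (A - B*y^2) 0 = A - B*y^2 := max_eq_left hpos.le
    have hd : HasDerivAt (fun z : ℝ => (A - B*z^2)^q) (gfun A B q y) y := by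
      have h := hF.rpow_const (p := q) (Or.inl hpos.ne')
      unfold gfun
      rw [hmax]
      convert h using 1
      ring
    apply hd.congr_of_eventuallyEq
    filter_upwards [hev] with z hz
    simp [hfun, max_eq_left hz.le]

lemma continuous_gfun (A B q : ℝ) (hq : 1 < q) : Continuous (gfun A B q) := by
  unfold gfun
  refine Continuous.mul (Continuous.mul continuous_const ?_) (by continuity)
  exact ((by continuity : Continuous fun y : ℝ => A - B * y^2).max
    continuous_const).rpow_const fun x => Or.inr (by linarith)

lemma contDiff_hfun (A B q : ℝ) (hq : 1 < q) : ContDiff ℝ 1 (hfun A B q) := by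
  rw [contDiff_one_iff_deriv]
  refine ⟨fun y => (hasDerivAt_hfun A B q hq y).differentiableAt, ?_⟩
  have h : deriv (hfun A B q) = gfun A B q :=
    funext fun y => (hasDerivAt_hfun A B q hq y).deriv
  rw [h]; exact continuous_gfun A B q hq

lemma hcs_gfun (A B q : ℝ) (hA : 0 < A) (hB : 0 < B) (hq : 1 < q) :
    HasCompactSupport (gfun A B q) := by
  apply HasCompactSupport.intro (isCompact_Icc (a := -(Real.sqrt (A/B))) (b := Real.sqrt (A/B)))
  intro y hy
  simp only [Set.mem_Icc, not_and_or, not_le] at hy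
  have h1 : Real.sqrt (A/B) < |y| := by
    rcases hy with h | h
    · rw [lt_abs]; right; linarith
    · rw [lt_abs]; left; exact h
  have h2 : A / B < y^2 := by
    have hs := Real.sq_sqrt (by positivity : (0:ℝ) ≤ A/B)
    nlinarith [Real.sqrt_nonneg (A/B), sq_abs y, abs_nonneg y]
  have h3 : A - B * y^2 < 0 := by
    rw [div_lt_iff₀ hB] at h2; nlinarith
  simp [gfun, max_eq_right h3.le, Real.zero_rpow (by linarith : q - 1 ≠ 0)]

lemma vfun_pow_eq (p A B t : ℝ) (hp : 1 < p) (ht : 0 < t) :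
    (fun x => vfun p A B t x ^ p) =
      fun x => (t ^ (-(1:ℝ)/(p+1))) ^ p * hfun A B (p/(p-1)) (x * t ^ (-(1:ℝ)/(p+1))) := by
  funext x
  unfold vfun hfun
  rw [Real.mul_rpow (Real.rpow_nonneg ht.le _) (Real.rpow_nonneg (le_max_right _ 0) _)]
  congr 1
  rw [← Real.rpow_mul (le_max_right _ 0)]
  congr 1
  field_simp

lemma deriv_vfun_pow (p A B t : ℝ) (hp : 1 < p) (ht : 0 < t) (x : ℝ) :
    deriv (fun y => vfun p A B t y ^ p) x
      = ((t ^ (-(1:ℝ)/(p+1))) ^ p * t ^ (-(1:ℝ)/(p+1)))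
        * gfun A B (p/(p-1)) (x * t ^ (-(1:ℝ)/(p+1))) := by
  have hq : 1 < p/(p-1) := by
    rw [lt_div_iff₀ (by linarith)]; linarith
  set s : ℝ := t ^ (-(1:ℝ)/(p+1)) with hs
  rw [vfun_pow_eq p A B t hp ht]
  have h1 : HasDerivAt (fun x : ℝ => x * s) s x := hasDerivAt_mul_const s
  have h2 : HasDerivAt (fun x : ℝ => hfun A B (p/(p-1)) (x * s))
      (gfun A B (p/(p-1)) (x * s) * s) x :=
    by have := (hasDerivAt_hfun A B (p/(p-1)) hq (x * s)).comp x h1; exact this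
  have h3 := (h2.const_mul (s ^ p)).deriv
  rw [h3]; ring


theorem stmt_13 (p μ um up A B : ℝ)
    (hp : 1 < p) (hμ : 0 < μ) (hu : um < up)
    (hB : B = (p - 1) / (2 * μ * p * (p + 1))) (hA : 0 < A)
    (hnorm : 2 * A ^ ((p+1)/(2*(p-1))) * B ^ (-(1:ℝ)/2) *
      (∫ θ in (0:ℝ)..(Real.pi/2), Real.sin θ ^ ((p+1)/(p-1))) = up - um) :
    (∀ t : ℝ, 0 < t → ContDiff ℝ 1 (fun x => vfun p A B t x ^ p)) ∧
    (∃ C : ℝ, 0 < C ∧ ∀ t : ℝ, 0 < t →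
      eLpNorm (fun x => deriv (fun y => vfun p A B t y ^ p) x) 2 volume
        = ENNReal.ofReal (C * t ^ (-(2 * p + 1) / (2 * (p + 1))))) := by
  have hB' : 0 < B := by
    rw [hB]; apply div_pos (by linarith) (by positivity)
  set q : ℝ := p / (p - 1) with hqdef
  have hq : 1 < q := by rw [hqdef, lt_div_iff₀ (by linarith)]; linarith
  constructor
  · intro t ht
    rw [vfun_pow_eq p A B t hp ht]
    exact contDiff_const.mul
      ((contDiff_hfun A B q hq).comp (contDiff_id.mul contDiff_const))
  · -- L² norm
    have gcont : Continuous (gfun A B q) := continuous_gfun A B q hq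
    have gcs : HasCompactSupport (gfun A B q) := hcs_gfun A B q hA hB' hq
    set I : ℝ := ∫ y : ℝ, (gfun A B q y)^2 with hIdef
    have gsqcont : Continuous (fun y => (gfun A B q y)^2) := by continuity
    have gsqcs : HasCompactSupport (fun y => (gfun A B q y)^2) :=
      gcs.comp_left (g := fun r : ℝ => r^2) (by simp)
    have gsqint : Integrable (fun y => (gfun A B q y)^2) volume :=
      gsqcont.integrable_of_hasCompactSupport gsqcs
    have hIpos : 0 < I := by
      rw [hIdef, integral_pos_iff_support_of_nonneg (fun y => sq_nonneg _) gsqint]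
      have hsub : Set.Ioo 0 (Real.sqrt (A/B)) ⊆ Function.support (fun y => (gfun A B q y)^2) := by
        intro y hy
        have hy0 : 0 < y := hy.1
        have hy1 : y < Real.sqrt (A/B) := hy.2
        have hAB : 0 < A - B * y^2 := by
          have hs := Real.sq_sqrt (by positivity : (0:ℝ) ≤ A/B)
          have h2 : y^2 < A / B := by nlinarith [Real.sqrt_nonneg (A/B)]
          rw [lt_div_iff₀ hB'] at h2
          nlinarith
        have hm : max (A - B * y^2) 0 = A - B * y^2 := max_eq_left hAB.le
        have hgneg : gfun A B q y < 0 := by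
          unfold gfun
          rw [hm]
          have h3 : (0:ℝ) < (A - B*y^2) ^ (q-1) := Real.rpow_pos_of_pos hAB _
          have h4 : -(2*B*y) < 0 := by nlinarith
          have h5 : 0 < q * (A - B*y^2)^(q-1) := by positivity
          exact mul_neg_of_pos_of_neg h5 h4
        simp only [Function.mem_support]
        exact pow_ne_zero 2 hgneg.ne
      have hR : 0 < Real.sqrt (A/B) := Real.sqrt_pos.mpr (by positivity)
      calc (0:ENNReal) < volume (Set.Ioo 0 (Real.sqrt (A/B))) := by
            rw [Real.volume_Ioo]; simp [hR]
        _ ≤ _ := measure_mono hsub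
    refine ⟨Real.sqrt I, Real.sqrt_pos.mpr hIpos, fun t ht => ?_⟩
    set s : ℝ := t ^ (-(1:ℝ)/(p+1)) with hsdef
    have hs : 0 < s := Real.rpow_pos_of_pos ht _
    set d : ℝ := s ^ p * s with hddef
    have hd : 0 < d := by positivity
    have hderiv : (fun x => deriv (fun y => vfun p A B t y ^ p) x)
        = fun x => d * gfun A B q (x * s) := by
      funext x
      exact deriv_vfun_pow p A B t hp ht x
    rw [hderiv]
    have hfc : Continuous (fun x => d * gfun A B q (x * s)) := by continuity
    have hfcs : HasCompactSupport (fun x => d * gfun A B q (x * s)) := by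
      have h1 : HasCompactSupport ((gfun A B q) ∘ (Homeomorph.mulRight₀ s hs.ne')) :=
        gcs.comp_homeomorph (Homeomorph.mulRight₀ s hs.ne')
      have h2 : HasCompactSupport (fun x => gfun A B q (x * s)) := h1
      exact h2.comp_left (g := fun r : ℝ => d * r) (by simp)
    have hmem : MemLp (fun x => d * gfun A B q (x * s)) 2 volume :=
      hfc.memLp_of_hasCompactSupport hfcs
    rw [hmem.eLpNorm_eq_integral_rpow_norm (by norm_num) (by norm_num)]
    congr 1
    have htr : (2:ENNReal).toReal = (2:ℝ) := by norm_num
    rw [htr]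
    have hint : (∫ a : ℝ, ‖d * gfun A B q (a * s)‖ ^ (2:ℝ)) = d^2 * (s⁻¹ * I) := by
      have he : (fun a : ℝ => ‖d * gfun A B q (a * s)‖ ^ (2:ℝ))
          = fun a => d^2 * (fun y => (gfun A B q y)^2) (a * s) := by
        funext a
        rw [Real.rpow_two, Real.norm_eq_abs, sq_abs, mul_pow]
      rw [he, integral_const_mul, MeasureTheory.Measure.integral_comp_mul_right
        (fun y => (gfun A B q y)^2) s, abs_inv, abs_of_pos hs, smul_eq_mul, ← hIdef]
    rw [hint]
    -- now (d^2 * (s⁻¹ * I)) ^ (2⁻¹ : ℝ) = √I * t ^ (-(2p+1)/(2(p+1)))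
    have hds : d^2 * s⁻¹ = t ^ ((-2) + 1/(p+1)) := by
      have hd1 : d = t ^ (-1:ℝ) := by
        rw [hddef, hsdef, ← Real.rpow_mul ht.le, ← Real.rpow_add ht]
        congr 1
        field_simp
        ring
      have hd2 : d^2 = t ^ (-2:ℝ) := by
        rw [hd1, ← Real.rpow_natCast (t ^ (-1:ℝ)) 2, ← Real.rpow_mul ht.le]
        norm_num
      have hs1 : s⁻¹ = t ^ ((1:ℝ)/(p+1)) := by
        rw [hsdef, ← Real.rpow_neg ht.le]
        congr 1
        ring
      rw [hd2, hs1, ← Real.rpow_add ht]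
    have hfinal : (d^2 * (s⁻¹ * I)) ^ ((2:ℝ)⁻¹)
        = Real.sqrt I * t ^ (-(2 * p + 1) / (2 * (p + 1))) := by
      rw [show d^2 * (s⁻¹ * I) = (d^2 * s⁻¹) * I by ring,
        Real.mul_rpow (by positivity) hIpos.le, hds, ← Real.rpow_mul ht.le,
        Real.sqrt_eq_rpow]
      rw [show ((-2) + 1/(p+1)) * (2:ℝ)⁻¹ = -(2 * p + 1) / (2 * (p + 1)) by field_simp; ring]
      rw [show ((2:ℝ)⁻¹) = (1/2 : ℝ) by norm_num]
      ring
    rw [hfinal]
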